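/- Let H be a real Hilbert space, let f_1, …, f_n be an orthonormal family in H, and let P be the orthogonal projection of H onto the span of {f_1, …, f_n}. Let m be a Borel measure on H with m({0}) = 0 such that ∫_H ‖ξ‖² dm(ξ) < ∞ and ∫_H |⟨χ(ξ), f_k⟩| dm(ξ) < ∞ for every k = 1, …, n. Then ∫_{{ξ : 0 < ‖P(ξ)‖ ≤ 1}} ‖P(ξ)‖ dm(ξ) < ∞ and ∫_{{ξ : ‖P(ξ)‖ > 1}} ‖P(ξ)‖² dm(ξ) < ∞; equivalently, ∫_{{ξ : P(ξ) ≠ 0}} max(‖P(ξ)‖, ‖P(ξ)‖²) dm(ξ) < ∞. -/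

import Mathlib

open MeasureTheory
open scoped RealInnerProductSpace

set_option maxHeartbeats 1000000

/-- The orthogonal projection onto the span of a finite orthonormal family is the sum of
inner products against the family. -/
lemma proj_le_sum_inner {H : Type*} [NormedAddCommGroup H] [InnerProductSpace ℝ H]
    [CompleteSpace H] (n : ℕ) (f : Fin n → H) (hf : Orthonormal ℝ f)
    (P : H →L[ℝ] H)
    (hP : ∀ x : H, P x =
      (haveI : FiniteDimensional ℝ (Submodule.span ℝ (Set.range f)) :=
        FiniteDimensional.span_of_finite ℝ (Set.finite_range f)
       (Submodule.orthogonalProjection (Submodule.span ℝ (Set.range f)) x : H))) (ξ : H) :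
    ‖P ξ‖ ≤ ∑ k, |⟪ξ, f k⟫| := by
  haveI : FiniteDimensional ℝ (Submodule.span ℝ (Set.range f)) :=
    FiniteDimensional.span_of_finite ℝ (Set.finite_range f)
  set K := Submodule.span ℝ (Set.range f) with hK
  let b₀ : Module.Basis (Fin n) ℝ K := Module.Basis.span hf.linearIndependent
  have hb₀ : (⇑b₀ : Fin n → K) =
      fun i => ⟨f i, Submodule.subset_span (Set.mem_range_self i)⟩ :=
    funext fun i => (Module.Basis.span_apply hf.linearIndependent i)
  have hon : Orthonormal ℝ (⇑b₀) := by
    rw [hb₀]; exact orthonormal_span hf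
  let bb : OrthonormalBasis (Fin n) ℝ K := OrthonormalBasis.mk hon b₀.span_eq.ge
  have hbb : ∀ i, (bb i : H) = f i := by
    intro i
    have : bb i = b₀ i := by simp [bb, OrthonormalBasis.coe_mk]
    rw [this, Module.Basis.span_apply]
  have hsum : P ξ = ∑ k, ⟪f k, ξ⟫ • f k := by
    rw [hP]
    have := bb.orthogonalProjectionOnto_apply_eq_sum (U := K) ξ
    rw [this]
    push_cast
    simp [hbb]
  rw [hsum]
  calc ‖∑ k, ⟪f k, ξ⟫ • f k‖ ≤ ∑ k, ‖⟪f k, ξ⟫ • f k‖ := norm_sum_le _ _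
    _ = ∑ k, |⟪ξ, f k⟫| := by
        refine Finset.sum_congr rfl fun k _ => ?_
        rw [norm_smul, hf.1 k, real_inner_comm]
        simp [Real.norm_eq_abs]

lemma proj_norm_le' {H : Type*} [NormedAddCommGroup H] [InnerProductSpace ℝ H]
    [CompleteSpace H] (n : ℕ) (f : Fin n → H)
    (P : H →L[ℝ] H)
    (hP : ∀ x : H, P x =
      (haveI : FiniteDimensional ℝ (Submodule.span ℝ (Set.range f)) :=
        FiniteDimensional.span_of_finite ℝ (Set.finite_range f)
       (Submodule.orthogonalProjection (Submodule.span ℝ (Set.range f)) x : H))) (ξ : H) :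
    ‖P ξ‖ ≤ ‖ξ‖ := by
  haveI : FiniteDimensional ℝ (Submodule.span ℝ (Set.range f)) :=
    FiniteDimensional.span_of_finite ℝ (Set.finite_range f)
  rw [hP]
  have h1 : ‖(Submodule.orthogonalProjection (Submodule.span ℝ (Set.range f)) ξ : H)‖
      = ‖Submodule.orthogonalProjection (Submodule.span ℝ (Set.range f)) ξ‖ :=
    Submodule.norm_coe _
  rw [h1]
  have h2 := (Submodule.orthogonalProjection (Submodule.span ℝ (Set.range f))).le_opNorm ξ
  have h3 := Submodule.orthogonalProjection_norm_le (Submodule.span ℝ (Set.range f)) (E := H) (𝕜 := ℝ)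
  nlinarith [norm_nonneg ξ]

theorem stmt_11 {H : Type*} [NormedAddCommGroup H] [InnerProductSpace ℝ H] [CompleteSpace H]
    [MeasurableSpace H] [BorelSpace H]
    (n : ℕ) (f : Fin n → H) (hf : Orthonormal ℝ f)
    (P : H →L[ℝ] H)
    (hP : ∀ x : H, P x =
      (haveI : FiniteDimensional ℝ (Submodule.span ℝ (Set.range f)) :=
        FiniteDimensional.span_of_finite ℝ (Set.finite_range f)
       (Submodule.orthogonalProjection (Submodule.span ℝ (Set.range f)) x : H)))
    (m : Measure H) (hm0 : m {0} = 0)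
    (hm2 : Integrable (fun ξ : H => ‖ξ‖ ^ 2) m)
    (hm1 : ∀ k : Fin n,
      Integrable (fun ξ : H => |⟪(if ‖ξ‖ ≤ 1 then ξ else 0), f k⟫|) m) :
    IntegrableOn (fun ξ : H => ‖P ξ‖) {ξ : H | 0 < ‖P ξ‖ ∧ ‖P ξ‖ ≤ 1} m ∧
    IntegrableOn (fun ξ : H => ‖P ξ‖ ^ 2) {ξ : H | 1 < ‖P ξ‖} m ∧
    IntegrableOn (fun ξ : H => max ‖P ξ‖ (‖P ξ‖ ^ 2)) {ξ : H | P ξ ≠ 0} m := by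
  haveI : FiniteDimensional ℝ (Submodule.span ℝ (Set.range f)) :=
    FiniteDimensional.span_of_finite ℝ (Set.finite_range f)
  have hPle : ∀ ξ : H, ‖P ξ‖ ≤ ‖ξ‖ := proj_norm_le' n f P hP
  have hcont : Continuous fun ξ : H => ‖P ξ‖ := P.continuous.norm
  have hmeasA : MeasurableSet {ξ : H | ‖ξ‖ ≤ 1} :=
    (isClosed_le continuous_norm continuous_const).measurableSet
  -- Global integrability of ‖P ξ‖ ^ 2
  have h2 : Integrable (fun ξ : H => ‖P ξ‖ ^ 2) m := by
    refine hm2.mono' (hcont.pow 2).aestronglyMeasurable (Filter.Eventually.of_forall fun ξ => ?_)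
    rw [Real.norm_eq_abs, abs_of_nonneg (by positivity)]
    exact pow_le_pow_left₀ (norm_nonneg _) (hPle ξ) 2
  -- Global integrability of ‖P ξ‖
  have h1 : Integrable (fun ξ : H => ‖P ξ‖) m := by
    have hA : IntegrableOn (fun ξ : H => ‖P ξ‖) {ξ : H | ‖ξ‖ ≤ 1} m := by
      have hg : Integrable (fun ξ : H => ∑ k, |⟪(if ‖ξ‖ ≤ 1 then ξ else 0), f k⟫|) m :=
        integrable_finset_sum _ fun k _ => hm1 k
      refine (hg.integrableOn).mono' hcont.aestronglyMeasurable.restrict ?_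
      filter_upwards [ae_restrict_mem hmeasA] with ξ hξ
      rw [Real.norm_eq_abs, abs_of_nonneg (norm_nonneg _)]
      calc ‖P ξ‖ ≤ ∑ k, |⟪ξ, f k⟫| := proj_le_sum_inner n f hf P hP ξ
        _ = ∑ k, |⟪(if ‖ξ‖ ≤ 1 then ξ else 0), f k⟫| := by
            refine Finset.sum_congr rfl fun k _ => ?_
            rw [if_pos hξ]
    have hAc : IntegrableOn (fun ξ : H => ‖P ξ‖) {ξ : H | ‖ξ‖ ≤ 1}ᶜ m := by
      refine (hm2.integrableOn).mono' hcont.aestronglyMeasurable.restrict ?_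
      filter_upwards [ae_restrict_mem hmeasA.compl] with ξ hξ
      have h1ξ : 1 < ‖ξ‖ := lt_of_not_ge hξ
      rw [Real.norm_eq_abs, abs_of_nonneg (norm_nonneg _)]
      calc ‖P ξ‖ ≤ ‖ξ‖ := hPle ξ
        _ ≤ ‖ξ‖ ^ 2 := by nlinarith
    have := hA.union hAc
    rwa [Set.union_compl_self, integrableOn_univ] at this
  refine ⟨h1.integrableOn, h2.integrableOn, ?_⟩
  have hmax : Integrable (fun ξ : H => max ‖P ξ‖ (‖P ξ‖ ^ 2)) m := by
    refine (h1.add h2).mono' ((hcont.max (hcont.pow 2)).aestronglyMeasurable)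
      (Filter.Eventually.of_forall fun ξ => ?_)
    rw [Real.norm_eq_abs, abs_of_nonneg (le_max_of_le_left (norm_nonneg _))]
    exact max_le (le_add_of_nonneg_right (by positivity))
      (le_add_of_nonneg_left (norm_nonneg _))
  exact hmax.integrableOn
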